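/- Consider a switched system ẋ = f_{σ(t)}(x, d(t)) with σ : [0,∞) → {1,…,n₀} piecewise constant with average dwell time τ_d (i.e., the number of switches on any interval (t,T) is at most N₀ + (T−t)/τ_d). Suppose there exist C¹ functions U_p, p = 1,…,n₀, class K∞ functions α̃₁, α̃₂ and λ₀ > 0 with α̃₁(‖x‖) ≤ U_p(x) ≤ α̃₂(‖x‖) and (∂U_p/∂x)·f_p(x,d(t)) ≤ −λ₀U_p(x) for all x, all p, and all admissible d. Suppose further μ₀ := sup_{x≠0} α̃₂(‖x‖)/α̃₁(‖x‖) < ∞ and τ_d > ln(μ₀)/λ₀. Then the origin of the switched system is globally asymptotically stable, uniformly over admissible d and all such σ. -/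

import Mathlib

/-- A class `K∞` function: continuous, strictly increasing on `[0,∞)`,
zero at zero, and unbounded. -/
def ClassKInf (f : ℝ → ℝ) : Prop :=
  ContinuousOn f (Set.Ici 0) ∧ StrictMonoOn f (Set.Ici 0) ∧ f 0 = 0 ∧
  Filter.Tendsto f Filter.atTop Filter.atTop

/-- A piecewise-constant switching signal `σ` with switching times `τ`,
possessing average dwell time `τd` with chatter bound `N₀`: the number of
switches on any interval is at most `N₀ + (length)/τd`. -/
structure SwitchSignal (n₀ : ℕ) (τd N₀ : ℝ) where
  σ : ℝ → Fin n₀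
  τ : ℕ → ℝ
  τ_zero : τ 0 = 0
  τ_mono : StrictMono τ
  τ_unbounded : Filter.Tendsto τ Filter.atTop Filter.atTop
  piecewise : ∀ k, ∀ t ∈ Set.Ico (τ k) (τ (k + 1)), σ t = σ (τ k)
  adt : ∀ k m : ℕ, (m : ℝ) ≤ N₀ + (τ (k + m) - τ k) / τd

lemma exp_gronwall {v : ℝ → ℝ} {lam a b : ℝ} (hab : a ≤ b)
    (hc : ContinuousOn v (Set.Icc a b))
    (hd : ∀ t ∈ Set.Ioo a b, ∃ v', HasDerivAt v v' t ∧ v' ≤ -lam * v t) :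
    v b ≤ v a * Real.exp (-lam * (b - a)) := by
  have hder : ∀ t ∈ Set.Ioo a b, ∃ g',
      HasDerivAt (fun s => v s * Real.exp (lam * s)) g' t ∧ g' ≤ 0 := by
    intro t ht
    obtain ⟨v', hv', hle⟩ := hd t ht
    have h0 : HasDerivAt (fun s : ℝ => lam * s) lam t := by
      simpa using (hasDerivAt_id t).const_mul lam
    have he : HasDerivAt (fun s => Real.exp (lam * s)) (Real.exp (lam * t) * lam) t := h0.exp
    refine ⟨_, hv'.mul he, ?_⟩
    have h1 := mul_le_mul_of_nonneg_right hle (Real.exp_pos (lam * t)).le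
    nlinarith [Real.exp_pos (lam * t)]
  have hg : AntitoneOn (fun t => v t * Real.exp (lam * t)) (Set.Icc a b) := by
    apply antitoneOn_of_deriv_nonpos (convex_Icc a b)
    · exact hc.mul ((Real.continuous_exp.comp (continuous_const.mul continuous_id)).continuousOn)
    · intro t ht
      rw [interior_Icc] at ht
      obtain ⟨g', hg', _⟩ := hder t ht
      exact hg'.differentiableAt.differentiableWithinAt
    · intro t ht
      rw [interior_Icc] at ht
      obtain ⟨g', hg', hle⟩ := hder t ht
      rw [hg'.deriv]; exact hle
  have h := hg (Set.left_mem_Icc.2 hab) (Set.right_mem_Icc.2 hab) hab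
  have hpos := Real.exp_pos (lam * b)
  have key : Real.exp (-lam * (b - a)) = Real.exp (lam * a) / Real.exp (lam * b) := by
    rw [← Real.exp_sub]; ring_nf
  rw [key, ← mul_div_assoc, le_div_iff₀ hpos]
  exact h

/-- The master exponential estimate. -/
lemma master_bound {n nd n₀ : ℕ}
    (𝔻 : Set (EuclideanSpace ℝ (Fin nd)))
    (f : Fin n₀ → EuclideanSpace ℝ (Fin n) → EuclideanSpace ℝ (Fin nd) →
      EuclideanSpace ℝ (Fin n))
    (U : Fin n₀ → EuclideanSpace ℝ (Fin n) → ℝ)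
    (hU_C1 : ∀ p, ContDiff ℝ 1 (U p))
    (α₁ α₂ : ℝ → ℝ) (hα₁ : ClassKInf α₁) (hα₂ : ClassKInf α₂)
    (hsand : ∀ p x, α₁ ‖x‖ ≤ U p x ∧ U p x ≤ α₂ ‖x‖)
    (lam₀ : ℝ) (hlam₀ : 0 < lam₀)
    (hdecay : ∀ p x d, d ∈ 𝔻 → fderiv ℝ (U p) x (f p x d) ≤ -lam₀ * U p x)
    (μ : ℝ) (hμ1 : 1 ≤ μ) (hμ_bdd : ∀ s, 0 < s → α₂ s ≤ μ * α₁ s)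
    (τd N₀ : ℝ) (hτd_pos : 0 < τd)
    (S : SwitchSignal n₀ τd N₀)
    (d : ℝ → EuclideanSpace ℝ (Fin nd)) (x : ℝ → EuclideanSpace ℝ (Fin n))
    (hd : ∀ t, 0 ≤ t → d t ∈ 𝔻)
    (hx : ∀ t, 0 ≤ t → HasDerivAt x (f (S.σ t) (x t) (d t)) t)
    (t : ℝ) (ht : 0 ≤ t) :
    α₁ ‖x t‖ ≤ Real.exp (N₀ * Real.log μ) *
      Real.exp (-(lam₀ - Real.log μ / τd) * t) * α₂ ‖x 0‖ := by
  classical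
  set L := Real.log μ with hLdef
  have hμpos : 0 < μ := lt_of_lt_of_le one_pos hμ1
  have hL0 : 0 ≤ L := Real.log_nonneg hμ1
  have hα₁0 : α₁ 0 = 0 := hα₁.2.2.1
  have hα₂0 : α₂ 0 = 0 := hα₂.2.2.1
  have hα₁nn : ∀ s, 0 ≤ s → 0 ≤ α₁ s := by
    intro s hs
    rw [← hα₁0]
    exact hα₁.2.1.monotoneOn (Set.mem_Ici.2 le_rfl) (Set.mem_Ici.2 hs) hs
  have hUnn : ∀ p y, 0 ≤ U p y := fun p y => (hα₁nn _ (norm_nonneg y)).trans (hsand p y).1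
  have hswitch : ∀ (p q : Fin n₀) y, U q y ≤ μ * U p y := by
    intro p q y
    rcases eq_or_lt_of_le (norm_nonneg y) with h0 | h0
    · have h1 : U q y ≤ 0 := by
        have h := (hsand q y).2
        rw [← h0, hα₂0] at h
        exact h
      have h2 : 0 ≤ μ * U p y := mul_nonneg hμpos.le (hUnn p y)
      linarith
    · have h1 := (hsand q y).2
      have h2 := hμ_bdd ‖y‖ h0
      have h4 : μ * α₁ ‖y‖ ≤ μ * U p y :=
        mul_le_mul_of_nonneg_left (hsand p y).1 hμpos.le
      linarith
  have hτ0 := S.τ_zero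
  have hτnn : ∀ k, 0 ≤ S.τ k := fun k => hτ0 ▸ S.τ_mono.monotone (Nat.zero_le k)
  -- interval decay
  have hstep : ∀ k, ∀ t', S.τ k ≤ t' → t' ≤ S.τ (k + 1) →
      U (S.σ (S.τ k)) (x t') ≤ U (S.σ (S.τ k)) (x (S.τ k)) *
        Real.exp (-lam₀ * (t' - S.τ k)) := by
    intro k t' h1 h2
    apply exp_gronwall h1
    · refine ((hU_C1 _).continuous.comp_continuousOn ?_)
      intro s hs
      exact ((hx s ((hτnn k).trans hs.1)).continuousAt).continuousWithinAt
    · intro s hs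
      have hs0 : 0 ≤ s := (hτnn k).trans hs.1.le
      have hσ : S.σ s = S.σ (S.τ k) := S.piecewise k s ⟨hs.1.le, lt_of_lt_of_le hs.2 h2⟩
      have hF : HasFDerivAt (U (S.σ (S.τ k))) (fderiv ℝ (U (S.σ (S.τ k))) (x s)) (x s) :=
        (((hU_C1 _).differentiable one_ne_zero) (x s)).hasFDerivAt
      have hxd := hx s hs0
      rw [hσ] at hxd
      exact ⟨_, hF.comp_hasDerivAt s hxd, hdecay _ _ _ (hd s hs0)⟩
  -- chained bound at switching times
  have hW : ∀ k : ℕ, U (S.σ (S.τ k)) (x (S.τ k)) * Real.exp (lam₀ * S.τ k) ≤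
      U (S.σ (S.τ 0)) (x 0) * μ ^ k := by
    intro k
    induction k with
    | zero => simp [hτ0]
    | succ k ih =>
      have h1 := hstep k (S.τ (k + 1)) (S.τ_mono (Nat.lt_succ_self k)).le le_rfl
      have h2 := hswitch (S.σ (S.τ k)) (S.σ (S.τ (k + 1))) (x (S.τ (k + 1)))
      have h3 : U (S.σ (S.τ (k + 1))) (x (S.τ (k + 1))) ≤
          μ * (U (S.σ (S.τ k)) (x (S.τ k)) * Real.exp (-lam₀ * (S.τ (k + 1) - S.τ k))) :=
        h2.trans (mul_le_mul_of_nonneg_left h1 hμpos.le)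
      have h4 := mul_le_mul_of_nonneg_right h3 (Real.exp_pos (lam₀ * S.τ (k + 1))).le
      have e1 : μ * (U (S.σ (S.τ k)) (x (S.τ k)) * Real.exp (-lam₀ * (S.τ (k + 1) - S.τ k))) *
          Real.exp (lam₀ * S.τ (k + 1)) =
          μ * (U (S.σ (S.τ k)) (x (S.τ k)) * Real.exp (lam₀ * S.τ k)) := by
        rw [mul_assoc, mul_assoc, ← Real.exp_add]
        ring_nf
      calc U (S.σ (S.τ (k + 1))) (x (S.τ (k + 1))) * Real.exp (lam₀ * S.τ (k + 1)) ≤ _ := h4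
        _ = μ * (U (S.σ (S.τ k)) (x (S.τ k)) * Real.exp (lam₀ * S.τ k)) := e1
        _ ≤ μ * (U (S.σ (S.τ 0)) (x 0) * μ ^ k) := mul_le_mul_of_nonneg_left ih hμpos.le
        _ = U (S.σ (S.τ 0)) (x 0) * μ ^ (k + 1) := by ring
  -- locate t in a switching interval
  have hex : ∃ m, t < S.τ m := (S.τ_unbounded.eventually_gt_atTop t).exists
  set K := Nat.find hex with hKdef
  have hK : t < S.τ K := Nat.find_spec hex
  have hKne : K ≠ 0 := by
    intro h
    rw [h, hτ0] at hK
    linarith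
  obtain ⟨k, hk⟩ := Nat.exists_eq_succ_of_ne_zero hKne
  rw [hk] at hK
  have hk1 : S.τ k ≤ t := by
    have := Nat.find_min hex (m := k) (by omega)
    push_neg at this
    exact this
  -- assemble
  have h1 := hstep k t hk1 hK.le
  have h2 := hW k
  have hkb : (k : ℝ) ≤ N₀ + t / τd := by
    have h := S.adt 0 k
    rw [Nat.zero_add, hτ0, sub_zero] at h
    have : S.τ k / τd ≤ t / τd := div_le_div_of_nonneg_right hk1 hτd_pos.le
    linarith
  have hμk : μ ^ k ≤ Real.exp ((N₀ + t / τd) * L) := by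
    have e : (μ : ℝ) ^ k = Real.exp ((k : ℝ) * L) := by
      rw [Real.exp_nat_mul, Real.exp_log hμpos]
    rw [e]
    exact Real.exp_le_exp.2 (mul_le_mul_of_nonneg_right hkb hL0)
  have hA : α₁ ‖x t‖ ≤ U (S.σ (S.τ k)) (x t) := (hsand _ _).1
  have hC : U (S.σ (S.τ k)) (x (S.τ k)) ≤
      U (S.σ (S.τ 0)) (x 0) * μ ^ k * Real.exp (-(lam₀ * S.τ k)) := by
    rw [Real.exp_neg, ← div_eq_mul_inv, le_div_iff₀ (Real.exp_pos _)]
    calc U (S.σ (S.τ k)) (x (S.τ k)) * Real.exp (lam₀ * S.τ k) ≤ _ := h2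
      _ = U (S.σ (S.τ 0)) (x 0) * μ ^ k := rfl
  have hB : U (S.σ (S.τ k)) (x t) ≤
      U (S.σ (S.τ 0)) (x 0) * μ ^ k * Real.exp (-(lam₀ * t)) := by
    calc U (S.σ (S.τ k)) (x t)
        ≤ U (S.σ (S.τ k)) (x (S.τ k)) * Real.exp (-lam₀ * (t - S.τ k)) := h1
      _ ≤ (U (S.σ (S.τ 0)) (x 0) * μ ^ k * Real.exp (-(lam₀ * S.τ k))) *
            Real.exp (-lam₀ * (t - S.τ k)) :=
          mul_le_mul_of_nonneg_right hC (Real.exp_pos _).le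
      _ = U (S.σ (S.τ 0)) (x 0) * μ ^ k * Real.exp (-(lam₀ * t)) := by
          rw [mul_assoc, mul_assoc, ← Real.exp_add]
          ring_nf
  have hU0 : U (S.σ (S.τ 0)) (x 0) ≤ α₂ ‖x 0‖ := (hsand _ _).2
  have hα₂nn : 0 ≤ α₂ ‖x 0‖ := (hUnn _ _).trans hU0
  have hfin : U (S.σ (S.τ 0)) (x 0) * μ ^ k * Real.exp (-(lam₀ * t)) ≤
      Real.exp (N₀ * L) * Real.exp (-(lam₀ - L / τd) * t) * α₂ ‖x 0‖ := by
    have e2 : Real.exp ((N₀ + t / τd) * L) * Real.exp (-(lam₀ * t)) =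
        Real.exp (N₀ * L) * Real.exp (-(lam₀ - L / τd) * t) := by
      rw [← Real.exp_add, ← Real.exp_add]
      congr 1
      field_simp
      ring
    have h5 : U (S.σ (S.τ 0)) (x 0) * μ ^ k ≤ α₂ ‖x 0‖ * Real.exp ((N₀ + t / τd) * L) := by
      have := mul_le_mul hU0 hμk (by positivity) hα₂nn
      linarith [this]
    calc U (S.σ (S.τ 0)) (x 0) * μ ^ k * Real.exp (-(lam₀ * t))
        ≤ α₂ ‖x 0‖ * Real.exp ((N₀ + t / τd) * L) * Real.exp (-(lam₀ * t)) :=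
          mul_le_mul_of_nonneg_right h5 (Real.exp_pos _).le
      _ = Real.exp (N₀ * L) * Real.exp (-(lam₀ - L / τd) * t) * α₂ ‖x 0‖ := by
          rw [mul_assoc, e2]; ring
  exact hA.trans (hB.trans hfin)

theorem stmt16 {n nd n₀ : ℕ}
    (𝔻 : Set (EuclideanSpace ℝ (Fin nd))) (h𝔻 : IsCompact 𝔻)
    (f : Fin n₀ → EuclideanSpace ℝ (Fin n) → EuclideanSpace ℝ (Fin nd) →
      EuclideanSpace ℝ (Fin n))
    (hf_lip : ∀ p d, d ∈ 𝔻 → LocallyLipschitz (fun x => f p x d))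
    (hf0 : ∀ p d, d ∈ 𝔻 → f p 0 d = 0)
    (U : Fin n₀ → EuclideanSpace ℝ (Fin n) → ℝ)
    (hU_C1 : ∀ p, ContDiff ℝ 1 (U p))
    (α₁ α₂ : ℝ → ℝ) (hα₁ : ClassKInf α₁) (hα₂ : ClassKInf α₂)
    (hsand : ∀ p x, α₁ ‖x‖ ≤ U p x ∧ U p x ≤ α₂ ‖x‖)
    (lam₀ : ℝ) (hlam₀ : 0 < lam₀)
    (hdecay : ∀ p x d, d ∈ 𝔻 → fderiv ℝ (U p) x (f p x d) ≤ -lam₀ * U p x)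
    -- μ₀ := sup_{x ≠ 0} α₂(‖x‖)/α₁(‖x‖) < ∞
    (μ₀ : ℝ) (hμ₀_bdd : ∀ s, 0 < s → α₂ s ≤ μ₀ * α₁ s)
    (τd N₀ : ℝ) (hτd_pos : 0 < τd) (hτd : Real.log μ₀ / lam₀ < τd) :
    -- uniform (Lyapunov) stability
    (∀ ε > 0, ∃ δ > 0, ∀ (S : SwitchSignal n₀ τd N₀)
      (d : ℝ → EuclideanSpace ℝ (Fin nd)) (x : ℝ → EuclideanSpace ℝ (Fin n)),
      (∀ t, 0 ≤ t → d t ∈ 𝔻) →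
      (∀ t, 0 ≤ t → HasDerivAt x (f (S.σ t) (x t) (d t)) t) →
      ‖x 0‖ < δ → ∀ t, 0 ≤ t → ‖x t‖ < ε) ∧
    -- global attractivity
    (∀ (S : SwitchSignal n₀ τd N₀)
      (d : ℝ → EuclideanSpace ℝ (Fin nd)) (x : ℝ → EuclideanSpace ℝ (Fin n)),
      (∀ t, 0 ≤ t → d t ∈ 𝔻) →
      (∀ t, 0 ≤ t → HasDerivAt x (f (S.σ t) (x t) (d t)) t) →
      Filter.Tendsto x Filter.atTop (nhds 0)) := by
  classical
  set μ := max μ₀ 1 with hμdef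
  have hμ1 : 1 ≤ μ := le_max_right _ _
  have hμpos : 0 < μ := lt_of_lt_of_le one_pos hμ1
  set L := Real.log μ with hLdef
  have hL0 : 0 ≤ L := Real.log_nonneg hμ1
  have hα₁0 : α₁ 0 = 0 := hα₁.2.2.1
  have hα₂0 : α₂ 0 = 0 := hα₂.2.2.1
  have hα₁nn : ∀ s, 0 ≤ s → 0 ≤ α₁ s := by
    intro s hs
    rw [← hα₁0]
    exact hα₁.2.1.monotoneOn (Set.mem_Ici.2 le_rfl) (Set.mem_Ici.2 hs) hs
  have hμ_bdd : ∀ s, 0 < s → α₂ s ≤ μ * α₁ s := by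
    intro s hs
    exact (hμ₀_bdd s hs).trans
      (mul_le_mul_of_nonneg_right (le_max_left _ _) (hα₁nn s hs.le))
  -- decay rate is positive
  have hLτ : L < lam₀ * τd := by
    rcases max_cases μ₀ 1 with ⟨h1, _⟩ | ⟨h1, _⟩
    · rw [hLdef, hμdef, h1]
      have := (div_lt_iff₀ hlam₀).1 hτd
      linarith
    · rw [hLdef, hμdef, h1, Real.log_one]
      positivity
  have hc : 0 < lam₀ - L / τd := by
    rw [sub_pos, div_lt_iff₀ hτd_pos]
    exact hLτ
  have key := fun S d x hd hx t ht => master_bound 𝔻 f U hU_C1 α₁ α₂ hα₁ hα₂ hsand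
    lam₀ hlam₀ hdecay μ hμ1 hμ_bdd τd N₀ hτd_pos S d x hd hx t ht
  have hα₁ε : ∀ ε : ℝ, 0 < ε → 0 < α₁ ε := by
    intro ε hε
    rw [← hα₁0]
    exact hα₁.2.1 (Set.mem_Ici.2 le_rfl) (Set.mem_Ici.2 hε.le) hε
  -- from α₁ ‖y‖ < α₁ ε deduce ‖y‖ < ε
  have hrev : ∀ (ε : ℝ) (y : EuclideanSpace ℝ (Fin n)), 0 < ε → α₁ ‖y‖ < α₁ ε → ‖y‖ < ε := by
    intro ε y hε h
    by_contra hcon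
    push_neg at hcon
    exact absurd (hα₁.2.1.monotoneOn (Set.mem_Ici.2 hε.le)
      (Set.mem_Ici.2 (norm_nonneg y)) hcon) (not_le.2 h)
  set C := Real.exp (N₀ * L) with hCdef
  have hCpos : 0 < C := Real.exp_pos _
  constructor
  · -- stability
    intro ε hε
    have hcont : Filter.Tendsto α₂ (nhdsWithin 0 (Set.Ici 0)) (nhds 0) := by
      have := hα₂.1 0 (Set.mem_Ici.2 le_rfl)
      rwa [ContinuousWithinAt, hα₂0] at this
    have hq : 0 < α₁ ε / C := div_pos (hα₁ε ε hε) hCpos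
    obtain ⟨δ, hδpos, hδ⟩ := Metric.tendsto_nhdsWithin_nhds.1 hcont _ hq
    refine ⟨δ, hδpos, ?_⟩
    intro S d x hd hx hx0 t ht
    have hb := key S d x hd hx t ht
    have h2 : α₂ ‖x 0‖ < α₁ ε / C := by
      have := hδ (Set.mem_Ici.2 (norm_nonneg (x 0)))
        (by simpa [Real.dist_eq, abs_of_nonneg (norm_nonneg (x 0))] using hx0)
      rw [Real.dist_eq, sub_zero] at this
      exact (le_abs_self _).trans_lt this
    have h3 : Real.exp (-(lam₀ - L / τd) * t) ≤ 1 := by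
      rw [Real.exp_le_one_iff]
      nlinarith
    have hα₂nn : 0 ≤ α₂ ‖x 0‖ := (hα₁nn _ (norm_nonneg (x 0))).trans
      ((hsand (S.σ 0) (x 0)).1.trans (hsand (S.σ 0) (x 0)).2)
    have h4 : α₁ ‖x t‖ < α₁ ε := by
      have h5 : C * Real.exp (-(lam₀ - L / τd) * t) * α₂ ‖x 0‖ ≤ C * α₂ ‖x 0‖ :=
        mul_le_mul_of_nonneg_right (mul_le_of_le_one_right hCpos.le h3) hα₂nn
      have h6 : C * α₂ ‖x 0‖ < C * (α₁ ε / C) := by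
        exact mul_lt_mul_of_pos_left h2 hCpos
      rw [mul_div_cancel₀ _ (ne_of_gt hCpos)] at h6
      calc α₁ ‖x t‖ ≤ _ := hb
        _ ≤ C * α₂ ‖x 0‖ := h5
        _ < α₁ ε := h6
    exact hrev ε (x t) hε h4
  · -- attractivity
    intro S d x hd hx
    rw [Metric.tendsto_atTop]
    intro ε hε
    have hT : Filter.Tendsto (fun t : ℝ => C * Real.exp (-(lam₀ - L / τd) * t) * α₂ ‖x 0‖)
        Filter.atTop (nhds 0) := by
      have h1 : Filter.Tendsto (fun t : ℝ => -(lam₀ - L / τd) * t) Filter.atTop Filter.atBot := by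
        have h0 : Filter.Tendsto (fun t : ℝ => (lam₀ - L / τd) * t) Filter.atTop Filter.atTop :=
          Filter.Tendsto.const_mul_atTop hc Filter.tendsto_id
        have h0' := Filter.tendsto_neg_atTop_atBot.comp h0
        have he : (fun t : ℝ => -(lam₀ - L / τd) * t) =
            (Neg.neg ∘ fun t : ℝ => (lam₀ - L / τd) * t) := by
          funext t; simp [Function.comp]; ring
        rw [he]; exact h0'
      have h2 : Filter.Tendsto (fun t : ℝ => Real.exp (-(lam₀ - L / τd) * t))
          Filter.atTop (nhds 0) := Real.tendsto_exp_atBot.comp h1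
      have h3 := (h2.const_mul C).mul_const (α₂ ‖x 0‖)
      simpa using h3
    have hev : ∀ᶠ t : ℝ in Filter.atTop,
        C * Real.exp (-(lam₀ - L / τd) * t) * α₂ ‖x 0‖ < α₁ ε :=
      hT.eventually (gt_mem_nhds (hα₁ε ε hε))
    obtain ⟨N, hN⟩ := (hev.and (Filter.eventually_ge_atTop 0)).exists_forall_of_atTop
    refine ⟨N, ?_⟩
    intro t ht'
    obtain ⟨h5, h6⟩ := hN t ht'
    have hb := key S d x hd hx t h6
    have h7 : α₁ ‖x t‖ < α₁ ε := lt_of_le_of_lt hb h5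
    have := hrev ε (x t) hε h7
    simpa [dist_eq_norm] using this
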